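/- For every extended logic program P, the paraconsistent well-founded model WFM_p(P) equals A(P), where A(P) = T ∪ not F with T the set of literals having a u/a-justified argument and F the set of literals all of whose arguments are u/a-overruled. -/

import Mathlib

/-- Objective literals: atoms and their explicit negations. -/
inductive Lit : Type where
  | pos : String → Lit
  | neg : String → Lit
deriving DecidableEq

/-- Explicit negation of an objective literal (`¬¬L = L`). -/
def Lit.compl : Lit → Lit
  | .pos a => .neg a
  | .neg a => .pos a

/-- A rule `head ← pos, not neg` of an extended logic program:
`pos` are the objective body literals and `neg` the default-negated ones. -/
structure Rule where
  head : Lit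
  pos : List Lit
  neg : List Lit

/-- An extended logic program is a set of rules. -/
abbrev Program := Set Rule

/-- An argument for `P`: a finite sequence of rules of `P` such that every
objective literal in the body of a rule is the head of a later rule. -/
def IsArg (P : Program) (A : List Rule) : Prop :=
  (∀ r ∈ A, r ∈ P) ∧
  ∀ i : Fin A.length, ∀ L ∈ (A.get i).pos,
    ∃ k : Fin A.length, i < k ∧ (A.get k).head = L

/-- The conclusions of an argument: the heads of its rules. -/
def conc (A : List Rule) : Set Lit := {L | ∃ r ∈ A, r.head = L}

/-- The assumptions of an argument: the objective literals `L` such that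
`not L` occurs in the body of one of its rules. -/
def assm (A : List Rule) : Set Lit := {L | ∃ r ∈ A, L ∈ r.neg}

/-- `A` is a minimal argument for `L`: no proper subargument of `A` has
conclusion `L`. -/
def ArgMinimalFor (P : Program) (A : List Rule) (L : Lit) : Prop :=
  IsArg P A ∧ L ∈ conc A ∧
  ∀ B : List Rule, B.Sublist A → B ≠ A → IsArg P B → L ∉ conc B

/-- The set of minimal arguments of `P`. -/
def Args (P : Program) : Type := {A : List Rule // ∃ L, ArgMinimalFor P A L}

/-- `A` undercuts `B`: some conclusion `L` of `A` is an assumption `not L` of `B`. -/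
def undercuts {P : Program} (A B : Args P) : Prop :=
  ∃ L, L ∈ conc A.1 ∧ L ∈ assm B.1

/-- `A` rebuts `B`: some conclusion `L` of `A` has `¬L` a conclusion of `B`. -/
def rebuts {P : Program} (A B : Args P) : Prop :=
  ∃ L, L ∈ conc A.1 ∧ L.compl ∈ conc B.1

/-- `A` attacks `B` iff `A` undercuts or rebuts `B`. -/
def attacks {P : Program} (A B : Args P) : Prop := undercuts A B ∨ rebuts A B

/-- `A` defeats `B` iff `A` undercuts `B`, or `A` rebuts `B` and `B` does not
undercut `A`. -/
def defeats {P : Program} (A B : Args P) : Prop :=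
  undercuts A B ∨ (rebuts A B ∧ ¬ undercuts B A)

/-- `A` strongly undercuts `B` iff `A` undercuts `B` and `B` does not undercut `A`. -/
def sundercuts {P : Program} (A B : Args P) : Prop :=
  undercuts A B ∧ ¬ undercuts B A

/-- The set of `x/y`-acceptable arguments with respect to `S`. -/
def Facc {Arg : Type*} (x y : Arg → Arg → Prop) (S : Set Arg) : Set Arg :=
  {A | ∀ B, x B A → ∃ C ∈ S, y C B}

theorem Facc_mono {Arg : Type*} (x y : Arg → Arg → Prop) : Monotone (Facc x y) := by
  intro S T hST A hA B hB
  obtain ⟨C, hC, hCB⟩ := hA B hB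
  exact ⟨C, hST hC, hCB⟩

/-- `Facc` as an order homomorphism. -/
def Fhom {Arg : Type*} (x y : Arg → Arg → Prop) : Set Arg →o Set Arg :=
  ⟨Facc x y, Facc_mono x y⟩

/-- The set of `x/y`-justified arguments. -/
def Jlfp {Arg : Type*} (x y : Arg → Arg → Prop) : Set Arg :=
  OrderHom.lfp (Fhom x y)

/-- Derivability in the least model of the GL-transformation `P/I`:
rules whose default-negated body literals avoid `I` may fire. -/
inductive GammaDeriv (P : Program) (I : Set Lit) : Lit → Prop where
  | step (r : Rule) (hr : r ∈ P) (hneg : ∀ L ∈ r.neg, L ∉ I)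
      (hpos : ∀ L ∈ r.pos, GammaDeriv P I L) : GammaDeriv P I r.head

/-- The Gelfond–Lifschitz operator `Γ_P`. -/
def Gamma (P : Program) (I : Set Lit) : Set Lit := {L | GammaDeriv P I L}

/-- The semi-normal version of `P`: each rule `L ← Body` becomes
`L ← not ¬L, Body`. -/
def seminormal (P : Program) : Program :=
  {r' | ∃ r ∈ P, r' = ⟨r.head, r.pos, r.head.compl :: r.neg⟩}

/-- `Γ_s`, the `Γ` operator of the semi-normal program. -/
def GammaS (P : Program) (I : Set Lit) : Set Lit := Gamma (seminormal P) I

theorem Gamma_anti (P : Program) : ∀ {I I' : Set Lit}, I ⊆ I' → Gamma P I' ⊆ Gamma P I := by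
  intro I I' h L hL
  induction hL with
  | step r hr hneg hpos ih =>
      exact GammaDeriv.step r hr (fun L hL hI => hneg L hL (h hI)) ih

/-- The monotone operator `I ↦ Γ_P (Γ_Q I)`. -/
def GammaComp (P Q : Program) : Set Lit →o Set Lit :=
  ⟨fun I => Gamma P (Gamma Q I), fun _ _ h => Gamma_anti P (Gamma_anti Q h)⟩

/-! ### Auxiliary development -/

@[simp] lemma Lit.compl_compl (L : Lit) : L.compl.compl = L := by
  cases L <;> rfl

lemma mem_conc_cons {r : Rule} {A : List Rule} {L : Lit} :
    L ∈ conc (r :: A) ↔ r.head = L ∨ L ∈ conc A := by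
  simp [conc]

lemma mem_assm_cons {r : Rule} {A : List Rule} {L : Lit} :
    L ∈ assm (r :: A) ↔ L ∈ r.neg ∨ L ∈ assm A := by
  simp [assm]

lemma conc_sublist {A B : List Rule} (h : B.Sublist A) : conc B ⊆ conc A := by
  rintro L ⟨r, hr, hh⟩; exact ⟨r, h.subset hr, hh⟩

lemma assm_sublist {A B : List Rule} (h : B.Sublist A) : assm B ⊆ assm A := by
  rintro L ⟨r, hr, hh⟩; exact ⟨r, h.subset hr, hh⟩

/-- A structural (list-recursive) description of arguments. -/
inductive Good (P : Program) : List Rule → Prop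
  | nil : Good P []
  | cons {r : Rule} {A : List Rule} (hr : r ∈ P)
      (hpos : ∀ L ∈ r.pos, L ∈ conc A) (hA : Good P A) : Good P (r :: A)

lemma isArg_of_good {P : Program} : ∀ {A : List Rule}, Good P A → IsArg P A := by
  intro A hA
  induction hA with
  | nil => exact ⟨by simp, fun i => absurd i.2 (by simp)⟩
  | @cons r A hr hpos hA ih =>
      obtain ⟨hmem, hidx⟩ := ih
      refine ⟨?_, ?_⟩
      · intro r' hr'
        rcases List.mem_cons.mp hr' with h | h
        · exact h ▸ hr
        · exact hmem r' h
      · intro i L hL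
        rcases i with ⟨iv, hi⟩
        match iv, hi with
        | 0, hi =>
            simp only [List.get] at hL
            obtain ⟨r', hr', hh⟩ := hpos L hL
            obtain ⟨j, hjlt, hj⟩ := List.mem_iff_getElem.mp hr'
            refine ⟨⟨j + 1, by simpa using Nat.succ_lt_succ hjlt⟩, by simp [Fin.lt_def], ?_⟩
            simpa [List.get, hj] using hh
        | (m + 1), hi =>
            have hm : m < A.length := by simpa using Nat.lt_of_succ_lt_succ hi
            have hL' : L ∈ (A.get ⟨m, hm⟩).pos := by simpa [List.get] using hL
            obtain ⟨⟨k, hk⟩, hlt, hh⟩ := hidx ⟨m, hm⟩ L hL'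
            refine ⟨⟨k + 1, by simpa using Nat.succ_lt_succ hk⟩, ?_, ?_⟩
            · simpa [Fin.lt_def] using Nat.succ_lt_succ (by simpa [Fin.lt_def] using hlt)
            · simpa [List.get] using hh

lemma good_of_isArg {P : Program} : ∀ {A : List Rule}, IsArg P A → Good P A := by
  intro A
  induction A with
  | nil => intro _; exact Good.nil
  | cons r A ih =>
      rintro ⟨hmem, hidx⟩
      refine Good.cons (hmem r (by simp)) ?_ (ih ⟨fun r' hr' => hmem r' (by simp [hr']), ?_⟩)
      · intro L hL
        have h0 : L ∈ ((r :: A).get ⟨0, by simp⟩).pos := by simpa [List.get] using hL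
        obtain ⟨⟨k, hk⟩, hlt, hh⟩ := hidx ⟨0, by simp⟩ L h0
        have hkpos : 0 < k := by simpa [Fin.lt_def] using hlt
        match k, hk, hkpos with
        | (j + 1), hk, _ =>
            have hj : j < A.length := by simpa using Nat.lt_of_succ_lt_succ hk
            exact ⟨A.get ⟨j, hj⟩, List.get_mem A ⟨j, hj⟩, by simpa [List.get] using hh⟩
      · intro i L hL
        rcases i with ⟨m, hm⟩
        have hL' : L ∈ ((r :: A).get ⟨m + 1, by simpa using Nat.succ_lt_succ hm⟩).pos := by
          simpa [List.get] using hL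
        obtain ⟨⟨k, hk⟩, hlt, hh⟩ := hidx _ L hL'
        have hkpos : m + 1 < k := by simpa [Fin.lt_def] using hlt
        match k, hk, hkpos with
        | (j + 1), hk, hkpos =>
            have hj : j < A.length := by simpa using Nat.lt_of_succ_lt_succ hk
            exact ⟨⟨j, hj⟩, by simpa [Fin.lt_def] using Nat.lt_of_succ_lt_succ hkpos,
              by simpa [List.get] using hh⟩

lemma good_append {P : Program} {A B : List Rule} (hA : Good P A) (hB : Good P B) :
    Good P (A ++ B) := by
  induction hA with
  | nil => simpa using hB
  | @cons r A' hr hpos hA' ih =>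
      exact Good.cons hr (fun L hL => conc_sublist (List.sublist_append_left A' B) (hpos L hL)) ih

lemma deriv_of_good {P : Program} {I : Set Lit} :
    ∀ {A : List Rule}, Good P A → (∀ M ∈ assm A, M ∉ I) → ∀ L ∈ conc A, GammaDeriv P I L := by
  intro A hA
  induction hA with
  | nil => rintro _ L ⟨r, hr, _⟩; simp at hr
  | @cons r A hr hpos hA ih =>
      intro hassm L hL
      have hfire : GammaDeriv P I r.head :=
        GammaDeriv.step r hr (fun M hM => hassm M (mem_assm_cons.mpr (Or.inl hM)))
          (fun M hM => ih (fun N hN => hassm N (mem_assm_cons.mpr (Or.inr hN))) M (hpos M hM))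
      rcases mem_conc_cons.mp hL with h | h
      · exact h ▸ hfire
      · exact ih (fun N hN => hassm N (mem_assm_cons.mpr (Or.inr hN))) L h

lemma combine_good {P : Program} {I : Set Lit} :
    ∀ (ls : List Lit),
      (∀ L ∈ ls, ∃ A, Good P A ∧ L ∈ conc A ∧ ∀ M ∈ assm A, M ∉ I) →
      ∃ B, Good P B ∧ (∀ L ∈ ls, L ∈ conc B) ∧ ∀ M ∈ assm B, M ∉ I := by
  intro ls
  induction ls with
  | nil => exact fun _ => ⟨[], Good.nil, by simp, by rintro M ⟨r, hr, _⟩; simp at hr⟩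
  | cons L ls ih =>
      intro h
      obtain ⟨A, hA, hLA, hassmA⟩ := h L (by simp)
      obtain ⟨B, hB, hls, hassmB⟩ := ih (fun L' hL' => h L' (by simp [hL']))
      refine ⟨A ++ B, good_append hA hB, ?_, ?_⟩
      · intro L' hL'
        rcases List.mem_cons.mp hL' with h' | h'
        · exact h' ▸ conc_sublist (List.sublist_append_left A B) hLA
        · exact conc_sublist (List.sublist_append_right A B) (hls L' h')
      · rintro M ⟨r, hr, hM⟩
        rcases List.mem_append.mp hr with h' | h'
        · exact hassmA M ⟨r, h', hM⟩
        · exact hassmB M ⟨r, h', hM⟩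

lemma good_of_deriv {P : Program} {I : Set Lit} {L : Lit} (h : GammaDeriv P I L) :
    ∃ A, Good P A ∧ L ∈ conc A ∧ ∀ M ∈ assm A, M ∉ I := by
  induction h with
  | step r hr hneg hpos ih =>
      obtain ⟨B, hB, hls, hassmB⟩ := combine_good r.pos ih
      refine ⟨r :: B, Good.cons hr hls hB, mem_conc_cons.mpr (Or.inl rfl), ?_⟩
      intro M hM
      rcases mem_assm_cons.mp hM with h' | h'
      · exact hneg M h'
      · exact hassmB M h'

lemma mem_gamma_iff {P : Program} {I : Set Lit} {L : Lit} :
    L ∈ Gamma P I ↔ ∃ A, Good P A ∧ L ∈ conc A ∧ ∀ M ∈ assm A, M ∉ I := by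
  constructor
  · exact good_of_deriv
  · rintro ⟨A, hA, hL, hassm⟩; exact deriv_of_good hA hassm L hL

/-- Seminormalization of a single rule. -/
def snR (r : Rule) : Rule := ⟨r.head, r.pos, r.head.compl :: r.neg⟩

lemma conc_map_snR (A : List Rule) : conc (A.map snR) = conc A := by
  ext L; constructor
  · rintro ⟨r', hr', hh⟩
    obtain ⟨r, hr, rfl⟩ := List.mem_map.mp hr'
    exact ⟨r, hr, hh⟩
  · rintro ⟨r, hr, hh⟩
    exact ⟨snR r, List.mem_map.mpr ⟨r, hr, rfl⟩, hh⟩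

lemma mem_assm_map_snR {A : List Rule} {M : Lit} :
    M ∈ assm (A.map snR) ↔ M ∈ assm A ∨ M.compl ∈ conc A := by
  constructor
  · rintro ⟨r', hr', hM⟩
    obtain ⟨r, hr, rfl⟩ := List.mem_map.mp hr'
    rcases List.mem_cons.mp hM with h | h
    · exact Or.inr ⟨r, hr, by rw [show M = r.head.compl from h, Lit.compl_compl]⟩
    · exact Or.inl ⟨r, hr, h⟩
  · rintro (⟨r, hr, hM⟩ | ⟨r, hr, hh⟩)
    · exact ⟨snR r, List.mem_map.mpr ⟨r, hr, rfl⟩, by simp [snR, hM]⟩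
    · exact ⟨snR r, List.mem_map.mpr ⟨r, hr, rfl⟩, by simp [snR, hh]⟩

lemma good_map_snR {P : Program} {A : List Rule} (h : Good P A) :
    Good (seminormal P) (A.map snR) := by
  induction h with
  | nil => exact Good.nil
  | @cons r A hr hpos hA ih =>
      exact Good.cons ⟨r, hr, rfl⟩
        (fun L hL => (conc_map_snR A) ▸ hpos L hL) ih

lemma good_unsn {P : Program} : ∀ {A' : List Rule}, Good (seminormal P) A' →
    ∃ A, Good P A ∧ A' = A.map snR := by
  intro A' h
  induction h with
  | nil => exact ⟨[], Good.nil, rfl⟩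
  | @cons r' A' hr' hpos hA' ih =>
      obtain ⟨A, hA, rfl⟩ := ih
      obtain ⟨r, hr, rfl⟩ := hr'
      exact ⟨r :: A, Good.cons hr (fun L hL => (conc_map_snR A) ▸ hpos L hL) hA,
        by simp [snR]⟩

lemma mem_gammaS_iff {P : Program} {I : Set Lit} {L : Lit} :
    L ∈ GammaS P I ↔ ∃ A, Good P A ∧ L ∈ conc A ∧ (∀ M ∈ assm A, M ∉ I) ∧
      (∀ M ∈ conc A, M.compl ∉ I) := by
  constructor
  · intro h
    obtain ⟨A', hA', hL, hassm⟩ := mem_gamma_iff.mp h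
    obtain ⟨A, hA, rfl⟩ := good_unsn hA'
    rw [conc_map_snR] at hL
    refine ⟨A, hA, hL, ?_, ?_⟩
    · exact fun M hM => hassm M (mem_assm_map_snR.mpr (Or.inl hM))
    · exact fun M hM => hassm M.compl (mem_assm_map_snR.mpr (Or.inr (by simpa using hM)))
  · rintro ⟨A, hA, hL, hassm, hcompl⟩
    refine mem_gamma_iff.mpr ⟨A.map snR, good_map_snR hA, (conc_map_snR A) ▸ hL, ?_⟩
    intro M hM
    rcases mem_assm_map_snR.mp hM with h | h
    · exact hassm M h
    · exact fun hI => hcompl M.compl h (by simpa using hI)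

lemma minimalize {P : Program} {L : Lit} :
    ∀ (n : ℕ) (A : List Rule), A.length ≤ n → IsArg P A → L ∈ conc A →
      ∃ A₀, A₀.Sublist A ∧ ArgMinimalFor P A₀ L := by
  intro n
  induction n with
  | zero =>
      intro A hlen hA hL
      have : A = [] := List.length_eq_zero_iff.mp (Nat.le_zero.mp hlen)
      subst this
      obtain ⟨r, hr, _⟩ := hL
      simp at hr
  | succ n ih =>
      intro A hlen hA hL
      by_cases hmin : ∀ B : List Rule, B.Sublist A → B ≠ A → IsArg P B → L ∉ conc B
      · exact ⟨A, List.Sublist.refl A, hA, hL, hmin⟩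
      · push_neg at hmin
        obtain ⟨B, hsub, hne, hB, hLB⟩ := hmin
        have hlt : B.length < A.length :=
          lt_of_le_of_ne hsub.length_le (fun h => hne (hsub.eq_of_length h))
        obtain ⟨A₀, hsub₀, hmin₀⟩ := ih B (by omega) hB hLB
        exact ⟨A₀, hsub₀.trans hsub, hmin₀⟩

/-- Equivalence of the `u/a` argumentation semantics and the paraconsistent
well-founded semantics WFSX: the true part `T = lfp(Γ∘Γ_s)` of `WFM_p(P)`
consists exactly of the conclusions of `u/a`-justified arguments, and the
false part (the literals `L` with `not L ∈ WFM_p(P)`, i.e. `L ∉ Γ_s T`)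
consists exactly of the literals all of whose arguments are `u/a`-overruled. -/
theorem wfsx_eq_argumentation (P : Program) (T : Set Lit)
    (hT : T = OrderHom.lfp (GammaComp P (seminormal P))) :
    T = {L | ∃ A : Args P, A ∈ Jlfp undercuts attacks ∧ L ∈ conc A.1} ∧
    {L | L ∉ GammaS P T} =
      {L | ∀ A : Args P, L ∈ conc A.1 →
        ∃ B : Args P, B ∈ Jlfp undercuts attacks ∧ attacks B A} := by
  classical
  have hgood : ∀ A : Args P, Good P A.1 := fun A => good_of_isArg A.2.choose_spec.1
  have hfix : Gamma P (GammaS P T) = T := by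
    rw [hT]; exact OrderHom.map_lfp (GammaComp P (seminormal P))
  have hJfix : Facc undercuts attacks (Jlfp (Arg := Args P) undercuts attacks)
      = Jlfp undercuts attacks := OrderHom.map_lfp (Fhom undercuts attacks)
  set J : Set (Args P) := Jlfp undercuts attacks with hJ
  -- conclusions of arguments whose assumptions avoid `Γ_s T` lie in `T`
  have hconcT : ∀ A : Args P, (∀ M ∈ assm A.1, M ∉ GammaS P T) → conc A.1 ⊆ T := by
    intro A h L hL
    rw [← hfix]
    exact deriv_of_good (hgood A) h L hL
  -- J ⊆ {A | assm A ∩ Γ_s T = ∅}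
  have hJphi : J ⊆ {A : Args P | ∀ M ∈ assm A.1, M ∉ GammaS P T} := by
    refine OrderHom.lfp_le (Fhom undercuts attacks) ?_
    intro A hA M hM hMs
    obtain ⟨B, hBgood, hMc, hassm, hcompl⟩ := mem_gammaS_iff.mp hMs
    obtain ⟨B₀, hsub, hmin⟩ :=
      minimalize B.length B le_rfl (isArg_of_good hBgood) hMc
    have hund : undercuts (⟨B₀, M, hmin⟩ : Args P) A := ⟨M, hmin.2.1, hM⟩
    obtain ⟨C, hCphi, hatt⟩ := hA _ hund
    have hCT : conc C.1 ⊆ T := hconcT C hCphi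
    rcases hatt with ⟨N, hNC, hNB⟩ | ⟨N, hNC, hNcB⟩
    · exact hassm N (assm_sublist hsub hNB) (hCT hNC)
    · exact hcompl N.compl (conc_sublist hsub hNcB) (by simpa using hCT hNC)
  -- key lemma: conclusions outside Γ_s I are attacked by justified arguments
  have subkey : ∀ (I : Set Lit), (∀ N ∈ I, ∃ C : Args P, C ∈ J ∧ N ∈ conc C.1) →
      ∀ (B : Args P) (M : Lit), M ∈ conc B.1 → M ∉ GammaS P I →
        ∃ C : Args P, C ∈ J ∧ attacks C B := by
    intro I hI B M hM hnot
    have hfail : ¬((∀ N ∈ assm B.1, N ∉ I) ∧ (∀ N ∈ conc B.1, N.compl ∉ I)) :=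
      fun ⟨h1, h2⟩ => hnot (mem_gammaS_iff.mpr ⟨B.1, hgood B, hM, h1, h2⟩)
    rcases not_and_or.mp hfail with h | h
    · push_neg at h
      obtain ⟨N, hNB, hNI⟩ := h
      obtain ⟨C, hCJ, hNC⟩ := hI N hNI
      exact ⟨C, hCJ, Or.inl ⟨N, hNC, hNB⟩⟩
    · push_neg at h
      obtain ⟨N, hNB, hNI⟩ := h
      obtain ⟨C, hCJ, hNC⟩ := hI N.compl hNI
      exact ⟨C, hCJ, Or.inr ⟨N.compl, hNC, by simpa using hNB⟩⟩
  set T' : Set Lit := {L | ∃ A : Args P, A ∈ J ∧ L ∈ conc A.1} with hT'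
  have hT'pre : Gamma P (GammaS P T') ⊆ T' := by
    intro L hL
    obtain ⟨A, hAgood, hLA, hassm⟩ := mem_gamma_iff.mp hL
    obtain ⟨A₀, hsub, hmin⟩ :=
      minimalize A.length A le_rfl (isArg_of_good hAgood) hLA
    have hmem : (⟨A₀, L, hmin⟩ : Args P) ∈ J := by
      show (⟨A₀, L, hmin⟩ : Args P) ∈ J
      rw [← hJfix]
      rintro B ⟨M, hMB, hMA₀⟩
      exact subkey T' (fun N hN => hN) B M hMB
        (hassm M (assm_sublist hsub hMA₀))
    exact ⟨⟨A₀, L, hmin⟩, hmem, hmin.2.1⟩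
  have claim1 : T = T' := by
    refine subset_antisymm ?_ ?_
    · rw [hT]
      exact OrderHom.lfp_le (GammaComp P (seminormal P)) hT'pre
    · rintro L ⟨A, hAJ, hLA⟩
      exact hconcT A (hJphi hAJ) hLA
  refine ⟨claim1, ?_⟩
  ext L
  simp only [Set.mem_setOf_eq]
  constructor
  · intro h A hLA
    exact subkey T (fun N hN => by rw [claim1] at hN; exact hN) A L hLA h
  · intro h hLg
    obtain ⟨B, hBgood, hLB, hassm, hcompl⟩ := mem_gammaS_iff.mp hLg
    obtain ⟨B₀, hsub, hmin⟩ :=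
      minimalize B.length B le_rfl (isArg_of_good hBgood) hLB
    obtain ⟨C, hCJ, hatt⟩ := h ⟨B₀, L, hmin⟩ hmin.2.1
    have hCT : conc C.1 ⊆ T := hconcT C (hJphi hCJ)
    rcases hatt with ⟨N, hNC, hNB⟩ | ⟨N, hNC, hNcB⟩
    · exact hassm N (assm_sublist hsub hNB) (hCT hNC)
    · exact hcompl N.compl (conc_sublist hsub hNcB) (by simpa using hCT hNC)
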